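/- Let φ : ℝ² → ℝ³ be an injective linear map, ℓ : ℝ² → ℝ a nonzero linear form, u ∈ ℝ² with ℓ(u) = 1, and w ∈ ker ℓ with w ≠ 0, such that ⟨φ(u), φ(w)⟩ = 0. Set t = φ(u)/‖φ(u)‖ and n = (φ(u) × φ(w))/(‖φ(u)‖·‖φ(w)‖), where × denotes the cross product in ℝ³. For arbitrary r ∈ ℝ and θ ∈ ℝ, define the linear map L : ℝ² → ℝ³ by L(v) = φ(v) − ℓ(v)·φ(u) + ℓ(v)·r·(cos θ · t + sin θ · n). Then for all v, v' ∈ ℝ²: ⟨L(v), L(v')⟩ = ⟨φ(v), φ(v')⟩ + (r² − ‖φ(u)‖²)·ℓ(v)·ℓ(v'). -/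

import Mathlib

open scoped RealInnerProductSpace

noncomputable section

abbrev E2 := EuclideanSpace ℝ (Fin 2)
abbrev E3 := EuclideanSpace ℝ (Fin 3)

/-- The cross product of two vectors of Euclidean `ℝ³`. -/
noncomputable def cross (a b : E3) : E3 :=
  (WithLp.equiv 2 (Fin 3 → ℝ)).symm
    ![a 1 * b 2 - a 2 * b 1, a 2 * b 0 - a 0 * b 2, a 0 * b 1 - a 1 * b 0]

lemma inner_cross_self_left (a b : E3) : ⟪a, cross a b⟫ = 0 := by
  simp [cross, PiLp.inner_apply, Fin.sum_univ_three]; ring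

lemma inner_cross_self_right (a b : E3) : ⟪b, cross a b⟫ = 0 := by
  simp [cross, PiLp.inner_apply, Fin.sum_univ_three]; ring

lemma inner_cross_cross (a b : E3) :
    ⟪cross a b, cross a b⟫ = ⟪a,a⟫ * ⟪b,b⟫ - ⟪a,b⟫ ^ 2 := by
  simp only [PiLp.inner_apply]
  simp [cross, PiLp.inner_apply, Fin.sum_univ_three]; ring

lemma ker_decomp (ℓ : E2 →ₗ[ℝ] ℝ) (hℓ : ℓ ≠ 0) (w : E2) (hw : ℓ w = 0) (hw0 : w ≠ 0)
    (x : E2) (hx : ℓ x = 0) : ∃ c : ℝ, x = c • w := by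
  have hker : LinearMap.ker ℓ = Submodule.span ℝ {w} := by
    symm
    apply Submodule.eq_of_le_of_finrank_eq
    · rw [Submodule.span_le, Set.singleton_subset_iff]; exact hw
    · rw [finrank_span_singleton hw0]
      have hne : LinearMap.range ℓ ≠ ⊥ := by
        simpa [LinearMap.range_eq_bot] using hℓ
      have h0 : Module.finrank ℝ (LinearMap.range ℓ) ≠ 0 := by
        rwa [ne_eq, Submodule.finrank_eq_zero]
      have hle : Module.finrank ℝ (LinearMap.range ℓ) ≤ 1 :=
        (Submodule.finrank_le _).trans_eq (Module.finrank_self ℝ)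
      have hsum := LinearMap.finrank_range_add_finrank_ker ℓ
      have h2 : Module.finrank ℝ E2 = 2 := by simp
      omega
  have hmem : x ∈ Submodule.span ℝ ({w} : Set E2) := by rw [← hker]; exact hx
  rcases Submodule.mem_span_singleton.mp hmem with ⟨c, hc⟩
  exact ⟨c, hc.symm⟩

/-- The pointwise pullback identity for the target differential of the corrugation process:
`⟨L(v), L(v')⟩ = ⟨φ(v), φ(v')⟩ + (r² − ‖φ(u)‖²)·ℓ(v)·ℓ(v')`. -/
theorem stmt3 (φ : E2 →ₗ[ℝ] E3) (hφ : Function.Injective φ)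
    (ℓ : E2 →ₗ[ℝ] ℝ) (hℓ : ℓ ≠ 0)
    (u : E2) (hu : ℓ u = 1)
    (w : E2) (hw : ℓ w = 0) (hw0 : w ≠ 0)
    (horth : ⟪φ u, φ w⟫ = 0)
    (r θ : ℝ)
    (t n : E3)
    (ht : t = ‖φ u‖⁻¹ • φ u)
    (hn : n = (‖φ u‖ * ‖φ w‖)⁻¹ • cross (φ u) (φ w))
    (L : E2 → E3)
    (hL : ∀ v : E2,
      L v = φ v - ℓ v • φ u + ℓ v • (r • (Real.cos θ • t + Real.sin θ • n))) :
    ∀ v v' : E2,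
      ⟪L v, L v'⟫ = ⟪φ v, φ v'⟫ + (r ^ 2 - ‖φ u‖ ^ 2) * (ℓ v * ℓ v') := by
  have hu0 : u ≠ 0 := by
    intro h; rw [h, map_zero] at hu; exact one_ne_zero hu.symm
  have ha0 : φ u ≠ 0 := fun h => hu0 (hφ (h.trans (map_zero φ).symm))
  have hb0 : φ w ≠ 0 := fun h => hw0 (hφ (h.trans (map_zero φ).symm))
  have hna : ‖φ u‖ ≠ 0 := norm_ne_zero_iff.mpr ha0
  have hnb : ‖φ w‖ ≠ 0 := norm_ne_zero_iff.mpr hb0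
  have horth' : ⟪φ w, φ u⟫ = 0 := by rw [real_inner_comm]; exact horth
  have htt : ⟪t, t⟫ = 1 := by
    rw [ht, real_inner_smul_left, real_inner_smul_right,
      real_inner_self_eq_norm_sq]
    field_simp
  have hnn : ⟪n, n⟫ = 1 := by
    rw [hn, real_inner_smul_left, real_inner_smul_right, inner_cross_cross,
      horth, real_inner_self_eq_norm_sq, real_inner_self_eq_norm_sq]
    field_simp; ring
  have htn : ⟪t, n⟫ = 0 := by
    rw [ht, hn, real_inner_smul_left, real_inner_smul_right,
      inner_cross_self_left]
    ring
  have hnt : ⟪n, t⟫ = 0 := by rw [real_inner_comm]; exact htn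
  have htb : ⟪t, φ w⟫ = 0 := by
    rw [ht, real_inner_smul_left, horth]; ring
  have hbt : ⟪φ w, t⟫ = 0 := by rw [real_inner_comm]; exact htb
  have hnb' : ⟪n, φ w⟫ = 0 := by
    rw [hn, real_inner_smul_left, real_inner_comm, inner_cross_self_right]; ring
  have hbn : ⟪φ w, n⟫ = 0 := by rw [real_inner_comm]; exact hnb'
  intro v v'
  obtain ⟨c, hc⟩ := ker_decomp ℓ hℓ w hw hw0 (v - ℓ v • u) (by simp [hu])
  obtain ⟨c', hc'⟩ := ker_decomp ℓ hℓ w hw hw0 (v' - ℓ v' • u) (by simp [hu])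
  have hφv : φ v = ℓ v • φ u + c • φ w := by
    have := congrArg φ hc
    rw [map_sub, map_smul, map_smul, sub_eq_iff_eq_add] at this
    rw [this]; abel
  have hφv' : φ v' = ℓ v' • φ u + c' • φ w := by
    have := congrArg φ hc'
    rw [map_sub, map_smul, map_smul, sub_eq_iff_eq_add] at this
    rw [this]; abel
  have hLv : L v = c • φ w + ℓ v • (r • (Real.cos θ • t + Real.sin θ • n)) := by
    rw [hL v, hφv]; module
  have hLv' : L v' = c' • φ w + ℓ v' • (r • (Real.cos θ • t + Real.sin θ • n)) := by
    rw [hL v', hφv']; module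
  rw [hLv, hLv', hφv, hφv']
  simp only [inner_add_left, inner_add_right, real_inner_smul_left,
    real_inner_smul_right, htt, hnn, htn, hnt, htb, hbt, hnb', hbn, horth, horth',
    real_inner_self_eq_norm_sq]
  have hsc := Real.sin_sq_add_cos_sq θ
  linear_combination ℓ v' * ℓ v * r ^ 2 * hsc
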